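/- Let h, τ > 0 and define the discrete fundamental solution e_{h,−iτ}(hm, kτ) = i H(kτ) (1 + iτ Δ_h)^{k−1} δ_h (hm) on the lattice R³_h × R⁺_τ, for k ≥ 1, where Δ_h is the star (7-point) discrete Laplacian and δ_h is the discrete delta. Then (−i ∂_τ − Δ_h) e_{h,−iτ} (hm, kτ) = δ_τ(kτ) δ_h(hm) for all lattice points, where ∂_τ is the forward time difference ∂_τ u(·, kτ) = (u(·,(k+1)τ) − u(·,kτ))/τ, δ_τ(0) = 1/τ and δ_τ(kτ) = 0 for k ≠ 0, δ_h(0) = 1/h³ and δ_h(hm) = 0 for m ≠ 0. -/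

import Mathlib

/-- The star (7-point) discrete Laplacian on the lattice `ℤ³` with mesh size `h`. -/
noncomputable def discLap (h : ℝ) (u : (Fin 3 → ℤ) → ℂ) : (Fin 3 → ℤ) → ℂ :=
  fun m => ∑ s, (u (m + Pi.single s 1) - 2 * u m + u (m - Pi.single s 1)) / (h : ℂ) ^ 2

/-- The discrete delta function `δ_h` on `ℤ³_h`. -/
noncomputable def discDelta (h : ℝ) : (Fin 3 → ℤ) → ℂ :=
  fun m => if m = 0 then 1 / (h : ℂ) ^ 3 else 0

/-- The discrete fundamental solution
`e_{h,-iτ}(hm, kτ) = i H(kτ) (1 + iτΔ_h)^{k-1} δ_h (hm)`. -/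
noncomputable def discFundSol (h τ : ℝ) : (Fin 3 → ℤ) → ℤ → ℂ := fun m k =>
  if 1 ≤ k then
    Complex.I *
      ((fun v : (Fin 3 → ℤ) → ℂ => fun m' => v m' + Complex.I * (τ : ℂ) * discLap h v m')^[(k - 1).toNat]
        (discDelta h)) m
  else 0

lemma discLap_smul (h : ℝ) (c : ℂ) (u : (Fin 3 → ℤ) → ℂ) (m : Fin 3 → ℤ) :
    discLap h (fun m' => c * u m') m = c * discLap h u m := by
  simp only [discLap, Finset.mul_sum]
  congr 1; ext s; ring

/-- `(-i ∂_τ - Δ_h) e_{h,-iτ}(hm, kτ) = δ_τ(kτ) δ_h(hm)` for all lattice points `(m, k)`,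
`k ≥ 0`, where `∂_τ` is the forward time difference. -/
theorem stmt8 (h τ : ℝ) (hh : 0 < h) (hτ : 0 < τ) (m : Fin 3 → ℤ) (k : ℤ) (hk : 0 ≤ k) :
    -Complex.I * ((discFundSol h τ m (k + 1) - discFundSol h τ m k) / (τ : ℂ)) -
      discLap h (fun m' => discFundSol h τ m' k) m =
      (if k = 0 then 1 / (τ : ℂ) else 0) * (if m = 0 then 1 / (h : ℂ) ^ 3 else 0) := by
  have hτ' : (τ : ℂ) ≠ 0 := by exact_mod_cast hτ.ne'
  rcases eq_or_lt_of_le hk with hk0 | hk1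
  · -- k = 0
    subst_vars
    have h1 : discFundSol h τ m 0 = 0 := by simp [discFundSol]
    have h2 : discFundSol h τ m 1 = Complex.I * discDelta h m := by
      simp [discFundSol]
    have h3 : discLap h (fun m' => discFundSol h τ m' (0:ℤ)) m = 0 := by
      simp [discLap, discFundSol]
    rw [zero_add, h1, h2, h3, discDelta]
    field_simp
    simp only [if_true]
    rw [mul_assoc _ (τ:ℂ), mul_one_div_cancel hτ']
    linear_combination (-(if m = 0 then 1 / (h:ℂ) ^ 3 else 0)) * Complex.I_sq
  · -- k ≥ 1
    have hk1' : (1:ℤ) ≤ k := hk1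
    have hkne : k ≠ 0 := by omega
    set F : ((Fin 3 → ℤ) → ℂ) → (Fin 3 → ℤ) → ℂ :=
      fun v => fun m' => v m' + Complex.I * (τ : ℂ) * discLap h v m' with hF
    have hn : (k + 1 - 1).toNat = (k - 1).toNat + 1 := by omega
    have e1 : discFundSol h τ m (k + 1)
        = Complex.I * F (F^[(k-1).toNat] (discDelta h)) m := by
      simp only [discFundSol, if_pos (by omega : (1:ℤ) ≤ k + 1), hn,
        Function.iterate_succ_apply']
      rfl
    have e2 : ∀ m', discFundSol h τ m' k
        = Complex.I * (F^[(k-1).toNat] (discDelta h)) m' := by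
      intro m'; simp only [discFundSol, if_pos hk1']
      rfl
    set w := F^[(k-1).toNat] (discDelta h) with hw
    have e3 : discLap h (fun m' => discFundSol h τ m' k) m
        = Complex.I * discLap h w m := by
      have : (fun m' => discFundSol h τ m' k) = fun m' => Complex.I * w m' := by
        funext m'; exact e2 m'
      rw [this, discLap_smul]
    rw [e1, e2 m, e3, if_neg hkne, zero_mul]
    have : F w m = w m + Complex.I * (τ : ℂ) * discLap h w m := rfl
    rw [this]
    field_simp
    linear_combination (-(↑τ * discLap h w m * Complex.I)) * Complex.I_sq
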